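/- arXiv:2310.10468 — 3 statements merged into one kernel-verified Lean document; each statement's English description precedes it below -/
import Mathlib

section
/- Let G = (ℤ/pℤ)^m and let Ω* denote the set of subgroups of G of index at most p. Writing N_H = Σ_{τ ∈ H} τ ∈ ℤ[G] for H ≤ G, one has the identity Σ_{H ∈ Ω*} N_H + ((p^{m−1} − 1) − Σ_{i=0}^{m−1} p^i) · N_G = p^{m−1} · 1 in the group ring ℤ[G]. -/
open Finset

section Aux
variable {p m : ℕ} [hp : Fact p.Prime]

instance : Finite ((Fin m → ZMod p) →ₗ[ZMod p] ZMod p) :=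
  Finite.of_injective (fun f => (f : (Fin m → ZMod p) → ZMod p)) DFunLike.coe_injective

lemma card_D : Nat.card ((Fin m → ZMod p) →ₗ[ZMod p] ZMod p) = p ^ m := by
  have e := ((Pi.basisFun (ZMod p) (Fin m)).constr (ZMod p) :
      (Fin m → ZMod p) ≃ₗ[ZMod p] ((Fin m → ZMod p) →ₗ[ZMod p] ZMod p))
  rw [← Nat.card_congr e.toEquiv]
  simp [Nat.card_fun, Nat.card_zmod]

lemma ker_scal (φ ψ : (Fin m → ZMod p) →ₗ[ZMod p] ZMod p) (hφ : φ ≠ 0)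
    (h : LinearMap.ker ψ = LinearMap.ker φ) : ∃ c : ZMod p, c ≠ 0 ∧ ψ = c • φ := by
  obtain ⟨x₀, hx₀⟩ : ∃ x, φ x ≠ 0 := by
    by_contra hc
    push_neg at hc
    exact hφ (LinearMap.ext fun x => hc x)
  have hψx₀ : ψ x₀ ≠ 0 := by
    intro h0
    have : x₀ ∈ LinearMap.ker ψ := h0
    rw [h] at this
    exact hx₀ this
  refine ⟨ψ x₀ * (φ x₀)⁻¹, by simp [hψx₀, hx₀], ?_⟩
  refine LinearMap.ext fun a => ?_
  have hm : φ x₀ • a - φ a • x₀ ∈ LinearMap.ker φ := by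
    simp [mul_comm]
  rw [← h] at hm
  have h2 := (LinearMap.mem_ker).mp hm
  simp only [map_sub, map_smul, smul_eq_mul, sub_eq_zero] at h2
  rw [LinearMap.smul_apply, smul_eq_mul]
  field_simp
  linear_combination h2

-- kernel of nonzero functional has index p
lemma ker_index (φ : (Fin m → ZMod p) →ₗ[ZMod p] ZMod p) (hφ : φ ≠ 0) :
    (LinearMap.ker φ).toAddSubgroup.index = p := by
  obtain ⟨x₀, hx₀⟩ : ∃ x, φ x ≠ 0 := by
    by_contra hc; push_neg at hc; exact hφ (LinearMap.ext fun x => hc x)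
  have hs : Function.Surjective φ := by
    intro c
    exact ⟨(c * (φ x₀)⁻¹) • x₀, by rw [map_smul, smul_eq_mul]; field_simp⟩
  have : (LinearMap.ker φ).toAddSubgroup = (φ.toAddMonoidHom).ker := by
    ext x; simp [LinearMap.mem_ker]
  rw [this, AddSubgroup.index_ker]
  have : (φ.toAddMonoidHom).range = ⊤ := AddMonoidHom.range_eq_top.mpr hs
  rw [this]
  exact (Nat.card_congr AddSubgroup.topEquiv.toEquiv).trans (Nat.card_zmod p)

-- every index-p subgroup is a kernel
lemma surj_ker (H : AddSubgroup (Fin m → ZMod p)) (hH : H.index = p) :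
    ∃ φ : (Fin m → ZMod p) →ₗ[ZMod p] ZMod p,
      LinearMap.ker φ = AddSubgroup.toZModSubmodule p H := by
  set S := AddSubgroup.toZModSubmodule p H with hS
  have hcard : Nat.card ((Fin m → ZMod p) ⧸ S) = p := by
    have : Nat.card ((Fin m → ZMod p) ⧸ S) = S.toAddSubgroup.index := rfl
    rw [this, AddSubgroup.toZModSubmodule_toAddSubgroup, hH]
  haveI : Nontrivial ((Fin m → ZMod p) ⧸ S) := by
    have h1 : 1 < Nat.card ((Fin m → ZMod p) ⧸ S) := by rw [hcard]; exact hp.out.one_lt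
    exact Finite.one_lt_card_iff_nontrivial.mp h1
  obtain ⟨x₀, hx₀⟩ := exists_ne (0 : (Fin m → ZMod p) ⧸ S)
  have hinj : Function.Injective (LinearMap.toSpanSingleton (ZMod p) _ x₀) := by
    intro a b hab
    by_contra hne
    have : (a - b) • x₀ = 0 := by
      simp [sub_smul, LinearMap.toSpanSingleton_apply] at hab ⊢
      simpa [sub_eq_zero] using hab
    have hab' : a - b ≠ 0 := sub_ne_zero.mpr hne
    exact hx₀ (by
      have := congrArg (fun y => (a - b)⁻¹ • y) this
      simpa [smul_smul, inv_mul_cancel₀ hab'] using this)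
  have hbij : Function.Bijective (LinearMap.toSpanSingleton (ZMod p) _ x₀) := by
    rw [Nat.bijective_iff_injective_and_card]
    exact ⟨hinj, by rw [Nat.card_zmod, hcard]⟩
  let e := LinearEquiv.ofBijective _ hbij
  refine ⟨e.symm.toLinearMap ∘ₗ S.mkQ, ?_⟩
  rw [LinearMap.ker_comp]
  have : LinearMap.ker e.symm.toLinearMap = ⊥ := LinearEquiv.ker _
  rw [this, Submodule.comap_bot, Submodule.ker_mkQ]

attribute [local instance] Classical.propDecidable

noncomputable instance : Fintype ((Fin m → ZMod p) →ₗ[ZMod p] ZMod p) := Fintype.ofFinite _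
noncomputable instance : Fintype (AddSubgroup (Fin m → ZMod p)) := Fintype.ofFinite _

lemma phi_count (g : Fin m → ZMod p) (hg : g ≠ 0) :
    (univ.filter fun φ : (Fin m → ZMod p) →ₗ[ZMod p] ZMod p => φ g = 0).card * p = p ^ m := by
  set E : ((Fin m → ZMod p) →ₗ[ZMod p] ZMod p) →+ ZMod p :=
    { toFun := fun φ => φ g, map_zero' := rfl, map_add' := fun φ ψ => rfl } with hE
  obtain ⟨i, hi⟩ := Function.ne_iff.mp hg
  have hi' : g i ≠ 0 := hi
  have hs : Function.Surjective E := by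
    intro c
    refine ⟨(c * (g i)⁻¹) • LinearMap.proj i, ?_⟩
    show (c * (g i)⁻¹) • (g i) = c
    rw [smul_eq_mul]
    field_simp
  have h1 : Nat.card ((Fin m → ZMod p) →ₗ[ZMod p] ZMod p)
      = Nat.card (_ ⧸ E.ker) * Nat.card E.ker :=
    AddSubgroup.card_eq_card_quotient_mul_card_addSubgroup E.ker
  have h2 : Nat.card (_ ⧸ E.ker) = p := by
    rw [Nat.card_congr (QuotientAddGroup.quotientKerEquivOfSurjective E hs).toEquiv,
      Nat.card_zmod]
  have h3 : Nat.card E.ker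
      = (univ.filter fun φ : (Fin m → ZMod p) →ₗ[ZMod p] ZMod p => φ g = 0).card := by
    rw [Nat.card_eq_fintype_card, ← Fintype.card_subtype]
    exact Fintype.card_congr (Equiv.subtypeEquivRight fun φ => Iff.rfl)
  rw [← card_D (p := p) (m := m), h1, h2, h3, mul_comm]

lemma fiber_card (g : Fin m → ZMod p) (H : AddSubgroup (Fin m → ZMod p))
    (hH : H.index = p) (hgH : g ∈ H) :
    (univ.filter fun φ : (Fin m → ZMod p) →ₗ[ZMod p] ZMod p =>
      (φ ≠ 0 ∧ φ g = 0) ∧ (LinearMap.ker φ).toAddSubgroup = H).card = p - 1 := by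
  haveI : NeZero p := ⟨hp.out.ne_zero⟩
  obtain ⟨φ₀, hφ₀⟩ := surj_ker H hH
  have hφ₀ne : φ₀ ≠ 0 := by
    intro h0
    rw [h0, LinearMap.ker_zero] at hφ₀
    have : H = ⊤ := by
      have := congrArg Submodule.toAddSubgroup hφ₀
      rw [AddSubgroup.toZModSubmodule_toAddSubgroup] at this
      rw [← this]
      rfl
    rw [this, AddSubgroup.index_top] at hH
    exact hp.out.one_lt.ne hH
  obtain ⟨x₀, hx₀⟩ : ∃ x, φ₀ x ≠ 0 := by
    by_contra hc; push_neg at hc; exact hφ₀ne (LinearMap.ext fun x => hc x)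
  have hker_inj : Function.Injective
      (Submodule.toAddSubgroup : Submodule (ZMod p) (Fin m → ZMod p) → AddSubgroup _) := by
    intro S T hST
    have h1 := congrArg (AddSubgroup.toZModSubmodule p) hST
    rwa [← AddSubgroup.toZModSubmodule_symm, OrderIso.apply_symm_apply,
      OrderIso.apply_symm_apply] at h1
  have key : (univ.filter fun c : ZMod p => c ≠ 0).card
      = (univ.filter fun φ : (Fin m → ZMod p) →ₗ[ZMod p] ZMod p =>
          (φ ≠ 0 ∧ φ g = 0) ∧ (LinearMap.ker φ).toAddSubgroup = H).card := by
    refine Finset.card_bij (fun c _ => c • φ₀) ?_ ?_ ?_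
    · intro c hc
      simp only [mem_filter, mem_univ, true_and] at hc ⊢
      have hcne : (c : ZMod p) ≠ 0 := hc
      have hker : LinearMap.ker (c • φ₀) = LinearMap.ker φ₀ := by
        ext x
        simp only [LinearMap.mem_ker, LinearMap.smul_apply, smul_eq_mul, mul_eq_zero]
        tauto
      have hgk : φ₀ g = 0 := by
        have : g ∈ AddSubgroup.toZModSubmodule p H := by simpa using hgH
        rw [← hφ₀] at this
        exact this
      refine ⟨⟨?_, ?_⟩, ?_⟩
      · intro h0
        have h1 := congrArg (fun ψ => ψ x₀) h0
        simp only [LinearMap.smul_apply, smul_eq_mul, LinearMap.zero_apply] at h1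
        exact hx₀ ((mul_eq_zero.mp h1).resolve_left hcne)
      · show c • φ₀ g = 0
        rw [hgk, smul_zero]
      · rw [hker, hφ₀, AddSubgroup.toZModSubmodule_toAddSubgroup]
    · intro c hc c' hc' hcc
      have := congrArg (fun ψ => ψ x₀) hcc
      simp only [LinearMap.smul_apply, smul_eq_mul] at this
      exact mul_right_cancel₀ hx₀ this
    · intro ψ hψ
      simp only [mem_filter, mem_univ, true_and] at hψ
      obtain ⟨⟨hψne, hψg⟩, hψH⟩ := hψ
      have hkerψ : LinearMap.ker ψ = LinearMap.ker φ₀ := by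
        apply hker_inj
        rw [hψH, hφ₀, AddSubgroup.toZModSubmodule_toAddSubgroup]
      obtain ⟨c, hc, hcψ⟩ := ker_scal φ₀ ψ hφ₀ne hkerψ
      exact ⟨c, by simpa using hc, hcψ.symm⟩
  rw [← key]
  have : (univ.filter fun c : ZMod p => c ≠ 0) = univ.erase 0 := by
    ext c; simp [Finset.mem_erase, and_comm]
  rw [this, Finset.card_erase_of_mem (mem_univ 0), Finset.card_univ, ZMod.card]

lemma hyp_count (g : Fin m → ZMod p) :
    (univ.filter fun H : AddSubgroup (Fin m → ZMod p) => H.index = p ∧ g ∈ H).card * (p - 1)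
      = (univ.filter fun φ : (Fin m → ZMod p) →ₗ[ZMod p] ZMod p =>
          φ ≠ 0 ∧ φ g = 0).card := by
  have hmaps : ∀ φ ∈ univ.filter
      (fun φ : (Fin m → ZMod p) →ₗ[ZMod p] ZMod p => φ ≠ 0 ∧ φ g = 0),
      (LinearMap.ker φ).toAddSubgroup ∈ univ.filter
        (fun H : AddSubgroup (Fin m → ZMod p) => H.index = p ∧ g ∈ H) := by
    intro φ hφ
    simp only [mem_filter, mem_univ, true_and] at hφ ⊢
    exact ⟨ker_index φ hφ.1, by simpa [LinearMap.mem_ker] using hφ.2⟩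
  rw [Finset.card_eq_sum_card_fiberwise hmaps]
  have hsum : ∀ H ∈ univ.filter (fun H : AddSubgroup (Fin m → ZMod p) => H.index = p ∧ g ∈ H),
      #((univ.filter (fun φ : (Fin m → ZMod p) →ₗ[ZMod p] ZMod p => φ ≠ 0 ∧ φ g = 0)).filter
          (fun φ => (LinearMap.ker φ).toAddSubgroup = H)) = p - 1 := by
    intro H hH
    simp only [mem_filter, mem_univ, true_and] at hH
    rw [Finset.filter_filter]
    exact fiber_card g H hH.1 hH.2
  rw [Finset.sum_congr rfl hsum, Finset.sum_const, smul_eq_mul]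


lemma count_ne (g : Fin m → ZMod p) (hg : g ≠ 0) :
    (univ.filter fun H : AddSubgroup (Fin m → ZMod p) => H.index = p ∧ g ∈ H).card * (p - 1)
      = p ^ (m - 1) - 1 := by
  rw [hyp_count g]
  have h0mem : (0 : (Fin m → ZMod p) →ₗ[ZMod p] ZMod p)
      ∈ univ.filter (fun φ : (Fin m → ZMod p) →ₗ[ZMod p] ZMod p => φ g = 0) := by simp
  have he : (univ.filter fun φ : (Fin m → ZMod p) →ₗ[ZMod p] ZMod p => φ ≠ 0 ∧ φ g = 0)
      = (univ.filter fun φ : (Fin m → ZMod p) →ₗ[ZMod p] ZMod p => φ g = 0).erase 0 := by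
    ext φ; simp [Finset.mem_erase, and_comm]
  rw [he, Finset.card_erase_of_mem h0mem]
  have hpc := phi_count g hg
  have hm0 : m ≠ 0 := by rintro rfl; exact hg (funext fun i => i.elim0)
  have hpm : p ^ m = p ^ (m - 1) * p := by
    conv_lhs => rw [show m = (m - 1) + 1 by omega]
    rw [pow_succ]
  rw [hpm] at hpc
  have := Nat.eq_of_mul_eq_mul_right hp.out.pos hpc
  omega

lemma count_all :
    (univ.filter fun H : AddSubgroup (Fin m → ZMod p) => H.index = p).card * (p - 1)
      = p ^ m - 1 := by
  have h := hyp_count (0 : Fin m → ZMod p)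
  have e1 : (univ.filter fun H : AddSubgroup (Fin m → ZMod p)
        => H.index = p ∧ (0 : Fin m → ZMod p) ∈ H)
      = univ.filter fun H : AddSubgroup (Fin m → ZMod p) => H.index = p := by
    ext H; simp [AddSubgroup.zero_mem]
  have e2 : (univ.filter fun φ : (Fin m → ZMod p) →ₗ[ZMod p] ZMod p => φ ≠ 0 ∧ φ 0 = 0)
      = univ.erase 0 := by
    ext φ; simp
  rw [e1, e2, Finset.card_erase_of_mem (mem_univ _), Finset.card_univ,
    ← Nat.card_eq_fintype_card, card_D] at h
  exact h

lemma le_p_split (S : AddSubgroup (Fin m → ZMod p)) : S.index ≤ p ↔ S = ⊤ ∨ S.index = p := by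
  have hcA : Nat.card (Fin m → ZMod p) = p ^ m := by simp [Nat.card_fun, Nat.card_zmod]
  have hdvd : S.index ∣ p ^ m := by rw [← hcA]; exact AddSubgroup.index_dvd_card (H := S)
  constructor
  · intro hle
    obtain ⟨k, hk, hkeq⟩ := (Nat.dvd_prime_pow hp.out).mp hdvd
    rcases Nat.eq_zero_or_pos k with rfl | hk1
    · left
      exact AddSubgroup.index_eq_one.mp (by simpa using hkeq)
    · right
      have hle' : p ^ k ≤ p ^ 1 := by rw [pow_one]; omega
      have hk1' : k ≤ 1 := (Nat.pow_le_pow_iff_right hp.out.one_lt).mp hle'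
      have hk2 : k = 1 := by omega
      rw [hkeq, hk2, pow_one]
  · rintro (rfl | h)
    · rw [AddSubgroup.index_top]; exact hp.out.pos
    · omega

noncomputable instance : Fintype (Subgroup (Multiplicative (Fin m → ZMod p))) :=
  Fintype.ofFinite _

lemma bridge_card (g : Multiplicative (Fin m → ZMod p)) :
    #(univ.filter fun H : Subgroup (Multiplicative (Fin m → ZMod p)) => H.index ≤ p ∧ g ∈ H)
      = #(univ.filter fun S : AddSubgroup (Fin m → ZMod p)
          => S.index ≤ p ∧ Multiplicative.toAdd g ∈ S) := by
  refine (Finset.card_bij (fun S _ => AddSubgroup.toSubgroup S) ?_ ?_ ?_).symm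
  · intro S hS
    simp only [mem_filter, mem_univ, true_and] at hS ⊢
    exact ⟨by rw [AddSubgroup.index_toSubgroup]; exact hS.1, hS.2⟩
  · intro S _ S' _ h
    exact AddSubgroup.toSubgroup.injective h
  · intro H hH
    simp only [mem_filter, mem_univ, true_and] at hH
    refine ⟨AddSubgroup.toSubgroup.symm H, ?_, (AddSubgroup.toSubgroup.apply_symm_apply H).symm⟩
    simp only [mem_filter, mem_univ, true_and]
    constructor
    · rw [← AddSubgroup.index_toSubgroup ((AddSubgroup.toSubgroup).symm H),
        AddSubgroup.toSubgroup.apply_symm_apply]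
      exact hH.1
    · show g ∈ AddSubgroup.toSubgroup (AddSubgroup.toSubgroup.symm H)
      rw [AddSubgroup.toSubgroup.apply_symm_apply]
      exact hH.2

lemma split_card (g : Fin m → ZMod p) :
    #(univ.filter fun S : AddSubgroup (Fin m → ZMod p) => S.index ≤ p ∧ g ∈ S)
      = #(univ.filter fun S : AddSubgroup (Fin m → ZMod p) => S.index = p ∧ g ∈ S) + 1 := by
  have he : (univ.filter fun S : AddSubgroup (Fin m → ZMod p) => S.index ≤ p ∧ g ∈ S)
      = insert ⊤ (univ.filter fun S : AddSubgroup (Fin m → ZMod p)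
          => S.index = p ∧ g ∈ S) := by
    ext S
    simp only [mem_filter, mem_univ, true_and, Finset.mem_insert]
    constructor
    · rintro ⟨hle, hgS⟩
      rcases (le_p_split S).mp hle with h | h
      · exact Or.inl h
      · exact Or.inr ⟨h, hgS⟩
    · rintro (rfl | ⟨hi, hgS⟩)
      · exact ⟨(le_p_split ⊤).mpr (Or.inl rfl), AddSubgroup.mem_top g⟩
      · exact ⟨(le_p_split S).mpr (Or.inr hi), hgS⟩
  rw [he, Finset.card_insert_of_notMem]
  simp only [mem_filter, mem_univ, true_and, AddSubgroup.index_top]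
  rintro ⟨h, -⟩
  exact absurd h (by have := hp.out.one_lt; omega)

end Aux

theorem stmt_3 (p m : ℕ) (hp : p.Prime) (hm : 1 ≤ m) :
    (∑ᶠ (H : Subgroup (Multiplicative (Fin m → ZMod p))) (_ : H.index ≤ p),
        ∑ᶠ (τ : Multiplicative (Fin m → ZMod p)) (_ : τ ∈ H),
          MonoidAlgebra.of ℤ (Multiplicative (Fin m → ZMod p)) τ)
      + (((p : ℤ) ^ (m - 1) - 1) - ∑ i ∈ Finset.range m, (p : ℤ) ^ i) •
          (∑ᶠ τ : Multiplicative (Fin m → ZMod p),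
            MonoidAlgebra.of ℤ (Multiplicative (Fin m → ZMod p)) τ)
      = ((p : ℤ) ^ (m - 1)) •
          (1 : MonoidAlgebra ℤ (Multiplicative (Fin m → ZMod p))) := by
  classical
  haveI hpf : Fact p.Prime := ⟨hp⟩
  haveI : NeZero p := ⟨hp.ne_zero⟩
  rw [finsum_cond_eq_sum_of_cond_iff
      (fun H : Subgroup (Multiplicative (Fin m → ZMod p)) =>
        ∑ᶠ (τ : Multiplicative (Fin m → ZMod p)) (_ : τ ∈ H),
          MonoidAlgebra.of ℤ (Multiplicative (Fin m → ZMod p)) τ)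
      (t := univ.filter fun H : Subgroup (Multiplicative (Fin m → ZMod p)) => H.index ≤ p)
      (fun {H} _ => by simp),
    finsum_eq_sum_of_fintype]
  have hinner : ∀ H : Subgroup (Multiplicative (Fin m → ZMod p)),
      (∑ᶠ (τ : Multiplicative (Fin m → ZMod p)) (_ : τ ∈ H),
          MonoidAlgebra.of ℤ (Multiplicative (Fin m → ZMod p)) τ)
        = ∑ τ ∈ univ.filter (fun τ : Multiplicative (Fin m → ZMod p) => τ ∈ H),
            MonoidAlgebra.of ℤ (Multiplicative (Fin m → ZMod p)) τ :=
    fun H => finsum_cond_eq_sum_of_cond_iff _ (fun {τ} _ => by simp)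
  simp only [hinner]
  have happly : ∀ (s : Finset (Multiplicative (Fin m → ZMod p)))
      (g : Multiplicative (Fin m → ZMod p)),
      (∑ τ ∈ s, MonoidAlgebra.of ℤ (Multiplicative (Fin m → ZMod p)) τ).coeff g
        = if g ∈ s then (1 : ℤ) else 0 := by
    intro s g
    have h1 : (∑ τ ∈ s, MonoidAlgebra.of ℤ (Multiplicative (Fin m → ZMod p)) τ).coeff g
        = ∑ τ ∈ s, (Finsupp.single τ 1 : Multiplicative (Fin m → ZMod p) →₀ ℤ) g := by
      rw [MonoidAlgebra.coeff_sum, Finset.sum_apply']; rfl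
    have h2 : (∑ τ ∈ s, (Finsupp.single τ 1 : Multiplicative (Fin m → ZMod p) →₀ ℤ) g)
        = if g ∈ s then (1 : ℤ) else 0 := by
      simp only [Finsupp.single_apply]
      rw [Finset.sum_ite_eq' s g (fun _ => (1 : ℤ))]
    exact h1.trans h2
  refine MonoidAlgebra.ext (Finsupp.ext fun g => ?_)
  rw [MonoidAlgebra.coeff_add, Finsupp.add_apply, MonoidAlgebra.coeff_smul, Finsupp.smul_apply,
    MonoidAlgebra.coeff_sum, Finset.sum_apply']
  rw [Finset.sum_congr rfl (fun H (_ : H ∈ univ.filter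
      (fun H : Subgroup (Multiplicative (Fin m → ZMod p)) => H.index ≤ p)) =>
    happly (univ.filter (· ∈ H)) g), happly univ g]
  simp only [Finset.mem_filter, Finset.mem_univ, true_and, if_true, smul_eq_mul, mul_one]
  rw [Finset.sum_boole]
  rw [Finset.filter_filter]
  have hone : ((p : ℤ) ^ (m - 1) • (1 : MonoidAlgebra ℤ (Multiplicative (Fin m → ZMod p)))).coeff g
      = if (1 : Multiplicative (Fin m → ZMod p)) = g then (p : ℤ) ^ (m - 1) else 0 := by
    rw [MonoidAlgebra.coeff_smul, Finsupp.smul_apply, MonoidAlgebra.one_def,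
      MonoidAlgebra.coeff_single, Finsupp.single_apply]
    split <;> simp
  rw [hone]
  rw [bridge_card, split_card]
  -- now pure arithmetic
  set n : ℕ := #(univ.filter fun S : AddSubgroup (Fin m → ZMod p)
      => S.index = p ∧ Multiplicative.toAdd g ∈ S) with hn
  have hgeom : (∑ i ∈ Finset.range m, (p : ℤ) ^ i) * ((p : ℤ) - 1) = (p : ℤ) ^ m - 1 :=
    geom_sum_mul (p : ℤ) m
  have hpm' : (p : ℤ) ^ m = (p : ℤ) ^ (m - 1) * p := by
    conv_lhs => rw [show m = (m - 1) + 1 by omega]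
    rw [pow_succ]
  rw [hpm'] at hgeom
  have h1p : 1 ≤ p := hp.pos
  have h1pm : 1 ≤ p ^ (m - 1) := Nat.one_le_pow _ _ hp.pos
  have hpne : ((p : ℤ) - 1) ≠ 0 := by
    have : (1 : ℤ) < (p : ℤ) := by exact_mod_cast hp.one_lt
    omega
  by_cases hg : Multiplicative.toAdd g = 0
  · -- g = 1
    have hg1 : (1 : Multiplicative (Fin m → ZMod p)) = g := by
      have : g = Multiplicative.ofAdd 0 := by
        rw [← hg]; rfl
      rw [this]; rfl
    have hcount : n * (p - 1) = p ^ m - 1 := by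
      rw [hn]
      have e1 : (univ.filter fun S : AddSubgroup (Fin m → ZMod p)
            => S.index = p ∧ Multiplicative.toAdd g ∈ S)
          = univ.filter fun S : AddSubgroup (Fin m → ZMod p) => S.index = p := by
        ext S; simp [hg, AddSubgroup.zero_mem]
      rw [e1]
      exact count_all
    have hcast : (n : ℤ) * ((p : ℤ) - 1) = (p : ℤ) ^ (m - 1) * p - 1 := by
      have := hcount
      zify [h1p, Nat.one_le_pow m p hp.pos] at this
      rw [this, hpm']
    rw [if_pos hg1]
    apply mul_right_cancel₀ hpne
    push_cast
    linear_combination hcast - hgeom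
  · have hg1 : ¬ ((1 : Multiplicative (Fin m → ZMod p)) = g) := by
      intro h
      apply hg
      rw [← h]; rfl
    have hcount : n * (p - 1) = p ^ (m - 1) - 1 := by
      rw [hn]; exact count_ne _ hg
    have hcast : (n : ℤ) * ((p : ℤ) - 1) = (p : ℤ) ^ (m - 1) - 1 := by
      have := hcount
      zify [h1p, h1pm] at this
      exact this
    rw [if_neg hg1]
    apply mul_right_cancel₀ hpne
    push_cast
    linear_combination hcast - hgeom
end

section
/- Let G be cyclic of prime order p with generator σ and k ≥ 1 an integer. Then in ℤ[G] the element (σ − 1)^k is divisible by p^{max{0, ⌊(k−1)/(p−1)⌋}} · (σ − 1). -/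
private lemma key_dvd {R : Type*} [CommRing R] (p : ℕ) (hp : p.Prime) (t : R)
    (h : (t + 1) ^ p = 1) : ((p : R) * t) ∣ t ^ p := by
  obtain ⟨n, rfl⟩ : ∃ n, p = n + 1 := ⟨p - 1, (Nat.succ_pred_eq_of_pos hp.pos).symm⟩
  have hexp := add_pow t 1 (n + 1)
  simp only [one_pow, mul_one] at hexp
  rw [h, Finset.sum_range_succ, Finset.sum_range_succ'] at hexp
  simp only [Nat.choose_self, Nat.cast_one, mul_one, pow_zero, Nat.choose_zero_right,
    one_mul] at hexp
  have heq : t ^ (n + 1) = -(∑ i ∈ Finset.range n, t ^ (i + 1) * ((n + 1).choose (i + 1) : R)) := by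
    linear_combination -hexp
  rw [heq, dvd_neg]
  apply Finset.dvd_sum
  intro i hi
  have hi' := Finset.mem_range.mp hi
  obtain ⟨m, hm⟩ := hp.dvd_choose_self (Nat.succ_ne_zero i) (by omega)
  refine ⟨t ^ i * (m : R), ?_⟩
  rw [hm]
  push_cast
  ring

private lemma iter_dvd {R : Type*} [CommRing R] (p : ℕ) (hp : 2 ≤ p) (t : R)
    (hdvd : ((p : R) * t) ∣ t ^ p) (q : ℕ) :
    ((p : R) ^ q * t) ∣ t ^ ((p - 1) * q + 1) := by
  induction q with
  | zero => simpa using dvd_refl t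
  | succ q ih =>
    obtain ⟨w, hw⟩ := ih
    obtain ⟨w', hw'⟩ := hdvd
    have hexp : (p - 1) * (q + 1) + 1 = ((p - 1) * q + 1) + (p - 1) := by ring
    refine ⟨w * w', ?_⟩
    have hp1 : (p - 1) + 1 = p := by omega
    calc t ^ ((p - 1) * (q + 1) + 1) = t ^ ((p - 1) * q + 1) * t ^ (p - 1) := by
          rw [hexp, pow_add]
      _ = (p : R) ^ q * w * (t * t ^ (p - 1)) := by rw [hw]; ring
      _ = (p : R) ^ q * w * t ^ p := by rw [← pow_succ', hp1]
      _ = (p : R) ^ q * w * ((p : R) * t * w') := by rw [hw']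
      _ = (p : R) ^ (q + 1) * t * (w * w') := by ring

theorem stmt_7 (p : ℕ) (hp : p.Prime) (G : Type) [CommGroup G] (σ : G)
    (hσ : orderOf σ = p) (hgen : ∀ g : G, g ∈ Subgroup.zpowers σ)
    (k : ℕ) (hk : 1 ≤ k) :
    ∃ x : MonoidAlgebra ℤ G,
      (MonoidAlgebra.of ℤ G σ - 1) ^ k =
        (p : MonoidAlgebra ℤ G) ^ ((k - 1) / (p - 1)) *
          (MonoidAlgebra.of ℤ G σ - 1) * x := by
  set t : MonoidAlgebra ℤ G := MonoidAlgebra.of ℤ G σ - 1 with ht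
  have hσp : σ ^ p = 1 := by rw [← hσ]; exact pow_orderOf_eq_one σ
  have h1 : (t + 1) ^ p = 1 := by
    rw [ht, sub_add_cancel, ← map_pow, hσp, map_one]
  have hdvd := key_dvd p hp t h1
  set q := (k - 1) / (p - 1) with hq
  obtain ⟨w, hw⟩ := iter_dvd p hp.two_le t hdvd q
  have hle : (p - 1) * q ≤ k - 1 := by
    rw [hq, mul_comm]; exact Nat.div_mul_le_self (k - 1) (p - 1)
  set r := k - 1 - (p - 1) * q with hr
  have hk' : k = ((p - 1) * q + 1) + r := by omega
  refine ⟨w * t ^ r, ?_⟩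
  conv_lhs => rw [hk', pow_add, hw]
  ring
end

section
/- Let G be a cyclic group with generator σ, P a free ℤ[G]-module of finite rank, c ≥ 0 an integer, and x ∈ P an element with (σ − 1)^{1+c} x = 0. Then already (σ − 1)x = 0. -/
open MonoidAlgebra

/-- The rational group algebra of a finite group is reduced. -/
lemma auxQ_reduced (G : Type) [CommGroup G] [Finite G] :
    IsReduced (MonoidAlgebra ℚ G) := by
  cases nonempty_fintype G
  have : NeZero ((Fintype.card G : ℚ)) :=
    ⟨by exact_mod_cast Nat.cast_ne_zero.mpr Fintype.card_ne_zero⟩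
  have hrad := IsSemisimpleModule.annihilator_isRadical
    (M := MonoidAlgebra ℚ G) (MonoidAlgebra ℚ G)
  constructor
  rintro a ⟨n, hn⟩
  have ha : a ∈ Module.annihilator (MonoidAlgebra ℚ G) (MonoidAlgebra ℚ G) := by
    refine hrad ⟨n, Module.mem_annihilator.mpr fun m => ?_⟩
    simp [smul_eq_mul, hn]
  have := Module.mem_annihilator.mp ha 1
  simpa using this

/-- The coefficientwise injection ℤ[G] → ℚ[G]. -/
noncomputable def auxφ (G : Type) [CommGroup G] :
    MonoidAlgebra ℤ G →+* MonoidAlgebra ℚ G :=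
  MonoidAlgebra.liftNCRingHom
    ((MonoidAlgebra.singleOneRingHom).comp (Int.castRingHom ℚ))
    (MonoidAlgebra.of ℚ G) (fun _ _ => Commute.all _ _)

lemma auxφ_single (G : Type) [CommGroup G] (a : G) (b : ℤ) :
    auxφ G (MonoidAlgebra.single a b) = MonoidAlgebra.single a (b : ℚ) := by
  show MonoidAlgebra.liftNC _ _ _ = _
  rw [MonoidAlgebra.liftNC_single]
  show MonoidAlgebra.singleOneRingHom ((b : ℚ)) * MonoidAlgebra.single a 1 = _
  rw [MonoidAlgebra.singleOneRingHom]
  show MonoidAlgebra.single (1 : G) ((b : ℚ)) * MonoidAlgebra.single a 1 = _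
  rw [MonoidAlgebra.single_mul_single, one_mul, mul_one]

lemma auxφ_eq (G : Type) [CommGroup G] (f : MonoidAlgebra ℤ G) :
    auxφ G f = MonoidAlgebra.ofCoeff (Finsupp.mapRange (Int.cast : ℤ → ℚ) Int.cast_zero f.coeff) := by
  induction f using MonoidAlgebra.induction_linear with
  | zero => simp
  | add f g hf hg => rw [map_add, MonoidAlgebra.coeff_add, Finsupp.mapRange_add (by exact_mod_cast fun a b => rfl), MonoidAlgebra.ofCoeff_add, hf, hg]
  | single a b => rw [MonoidAlgebra.coeff_single, Finsupp.mapRange_single, MonoidAlgebra.ofCoeff_single]; exact auxφ_single G a b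

lemma auxφ_injective (G : Type) [CommGroup G] : Function.Injective (auxφ G) := by
  intro f g h
  rw [auxφ_eq, auxφ_eq] at h
  exact MonoidAlgebra.coeff_injective (Finsupp.mapRange_injective _ _ Int.cast_injective (MonoidAlgebra.ofCoeff_injective h))

/-- key ring fact: nilpotents of ℤ[G] vanish. -/
lemma auxZ_noNilpotent (G : Type) [CommGroup G] [Finite G] (a : MonoidAlgebra ℤ G)
    (h : IsNilpotent a) : a = 0 := by
  have hred := auxQ_reduced G
  have : IsNilpotent (auxφ G a) := h.map (auxφ G)
  have := this.eq_zero
  have h0 : auxφ G a = auxφ G 0 := by simpa using this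
  exact auxφ_injective G h0

lemma aux_ring_key (G : Type) [CommGroup G] [Finite G] (t r : MonoidAlgebra ℤ G)
    (c : ℕ) (h : t ^ (1 + c) * r = 0) : t * r = 0 := by
  apply auxZ_noNilpotent
  refine ⟨1 + c, ?_⟩
  rw [mul_pow]
  calc t ^ (1 + c) * r ^ (1 + c) = (t ^ (1 + c) * r) * r ^ c := by ring
  _ = 0 := by rw [h, zero_mul]

theorem stmt_9 (G : Type) [CommGroup G] [Finite G] (σ : G)
    (hgen : ∀ g : G, g ∈ Subgroup.zpowers σ)
    (P : Type) [AddCommGroup P] [Module (MonoidAlgebra ℤ G) P]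
    [Module.Free (MonoidAlgebra ℤ G) P] [Module.Finite (MonoidAlgebra ℤ G) P]
    (c : ℕ) (x : P) (hx : (MonoidAlgebra.of ℤ G σ - 1) ^ (1 + c) • x = 0) :
    (MonoidAlgebra.of ℤ G σ - 1) • x = 0 := by
  set R := MonoidAlgebra ℤ G
  set t : R := MonoidAlgebra.of ℤ G σ - 1 with ht
  let b := Module.Free.chooseBasis R P
  rw [← (b.repr.map_eq_zero_iff)]
  rw [map_smul]
  refine Finsupp.ext fun i => ?_
  have hcoef : t ^ (1 + c) * b.repr x i = 0 := by
    have : b.repr ((t ^ (1 + c)) • x) = 0 := by rw [hx, map_zero]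
    have := congrArg (fun f => f i) this
    simpa [Finsupp.smul_apply, smul_eq_mul] using this
  have := aux_ring_key G t (b.repr x i) c hcoef
  rw [Finsupp.smul_apply, smul_eq_mul, this, Finsupp.coe_zero, Pi.zero_apply]
end
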